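/- Suppose H_2, H_o, H_d are complex matrix blocks with ‖H_2^{-1}‖ ≤ M_1, ‖H_o‖ ≤ M_2, and ‖H_d^{-1}‖ ≤ 1/(c - M_2) for some c with c > M_2 + M_1 M_2². Then the Schur complement S = H_2 - H_o^T H_d^{-1} H_o is invertible and ‖S^{-1}‖ ≤ (c - M_2) M_1 / (c - M_2 - M_1 M_2²). -/

import Mathlib

open Matrix
open scoped Matrix.Norms.L2Operator ComplexConjugate

lemma euclid_conj_norm {n : ℕ} (f : Fin n → ℂ) :
    ‖((WithLp.equiv 2 (Fin n → ℂ)).symm (fun i => conj (f i)))‖ =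
      ‖(WithLp.equiv 2 (Fin n → ℂ)).symm f‖ := by
  simp [EuclideanSpace.norm_eq]

lemma l2_opNorm_transpose_le {k m : ℕ} (A : Matrix (Fin k) (Fin m) ℂ) : ‖Aᵀ‖ ≤ ‖A‖ := by
  rw [Matrix.l2_opNorm_def]
  refine ContinuousLinearMap.opNorm_le_bound _ (norm_nonneg A) fun x => ?_
  have happ : (Matrix.toEuclideanLin.trans LinearMap.toContinuousLinearMap) Aᵀ x =
      (WithLp.equiv 2 (Fin m → ℂ)).symm (Aᵀ *ᵥ (WithLp.equiv 2 (Fin k → ℂ)) x) := rfl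
  have key : Aᵀ *ᵥ (WithLp.equiv 2 (Fin k → ℂ)) x =
      fun j => conj ((Aᴴ *ᵥ fun i => conj (x i)) j) := by
    funext j
    simp [Matrix.mulVec, dotProduct, Matrix.conjTranspose_apply, map_sum]
  rw [happ, key]
  have h1 : ‖(WithLp.equiv 2 (Fin m → ℂ)).symm (fun j => conj ((Aᴴ *ᵥ fun i => conj (x i)) j))‖
      = ‖(WithLp.equiv 2 (Fin m → ℂ)).symm (Aᴴ *ᵥ fun i => conj (x i))‖ :=
    euclid_conj_norm _
  rw [h1]
  have h2 := Matrix.l2_opNorm_mulVec Aᴴ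
    ((WithLp.equiv 2 (Fin k → ℂ)).symm (fun i => conj (x i)))
  have h3 : ‖((WithLp.equiv 2 (Fin k → ℂ)).symm (fun i => conj (x i)))‖ = ‖x‖ := by
    have := euclid_conj_norm (fun i => x i)
    simpa using this
  calc ‖(WithLp.equiv 2 (Fin m → ℂ)).symm (Aᴴ *ᵥ fun i => conj (x i))‖
      ≤ ‖Aᴴ‖ * ‖((WithLp.equiv 2 (Fin k → ℂ)).symm (fun i => conj (x i)))‖ := h2
    _ = ‖A‖ * ‖x‖ := by rw [Matrix.l2_opNorm_conjTranspose, h3]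

theorem stmt9 (m k : ℕ) (H2 : Matrix (Fin m) (Fin m) ℂ) (Ho : Matrix (Fin k) (Fin m) ℂ)
    (Hd : Matrix (Fin k) (Fin k) ℂ) (M1 M2 c : ℝ) (hM1 : 0 < M1) (hM2 : 0 < M2)
    (hc : M2 + M1 * M2 ^ 2 < c) (hH2 : IsUnit H2) (hHd : IsUnit Hd)
    (h1 : ‖H2⁻¹‖ ≤ M1) (h2 : ‖Ho‖ ≤ M2) (h3 : ‖Hd⁻¹‖ ≤ 1 / (c - M2)) :
    IsUnit (H2 - Hoᵀ * Hd⁻¹ * Ho) ∧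
      ‖(H2 - Hoᵀ * Hd⁻¹ * Ho)⁻¹‖ ≤ (c - M2) * M1 / (c - M2 - M1 * M2 ^ 2) := by
  have hM1M2 : 0 < M1 * M2 ^ 2 := by positivity
  have hcM2 : 0 < c - M2 := by linarith
  have hden : 0 < c - M2 - M1 * M2 ^ 2 := by linarith
  set E : Matrix (Fin m) (Fin m) ℂ := H2⁻¹ * (Hoᵀ * Hd⁻¹ * Ho) with hE_def
  have hHoT : ‖Hoᵀ‖ ≤ M2 := (l2_opNorm_transpose_le Ho).trans h2
  have hEnorm : ‖E‖ ≤ M1 * M2 ^ 2 / (c - M2) := by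
    have b1 : ‖E‖ ≤ ‖H2⁻¹‖ * ‖Hoᵀ * Hd⁻¹ * Ho‖ := Matrix.l2_opNorm_mul _ _
    have b2 : ‖Hoᵀ * Hd⁻¹ * Ho‖ ≤ ‖Hoᵀ * Hd⁻¹‖ * ‖Ho‖ := Matrix.l2_opNorm_mul _ _
    have b3 : ‖Hoᵀ * Hd⁻¹‖ ≤ ‖Hoᵀ‖ * ‖Hd⁻¹‖ := Matrix.l2_opNorm_mul _ _
    have hHdinv : 0 ≤ ‖Hd⁻¹‖ := norm_nonneg _
    have : ‖Hoᵀ * Hd⁻¹ * Ho‖ ≤ M2 * (1 / (c - M2)) * M2 := by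
      calc ‖Hoᵀ * Hd⁻¹ * Ho‖ ≤ ‖Hoᵀ * Hd⁻¹‖ * ‖Ho‖ := b2
        _ ≤ (‖Hoᵀ‖ * ‖Hd⁻¹‖) * ‖Ho‖ := by
            exact mul_le_mul_of_nonneg_right b3 (norm_nonneg _)
        _ ≤ (M2 * (1 / (c - M2))) * M2 :=
            mul_le_mul (mul_le_mul hHoT h3 hHdinv hM2.le) h2 (norm_nonneg _) (by positivity)
    calc ‖E‖ ≤ ‖H2⁻¹‖ * ‖Hoᵀ * Hd⁻¹ * Ho‖ := b1
      _ ≤ M1 * (M2 * (1 / (c - M2)) * M2) := by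
          apply mul_le_mul h1 this (norm_nonneg _) (le_of_lt hM1)
      _ = M1 * M2 ^ 2 / (c - M2) := by ring
  have hElt1 : ‖E‖ < 1 := by
    refine hEnorm.trans_lt ?_
    rw [div_lt_one hcM2]; linarith
  have hUone : IsUnit (1 - E) := isUnit_one_sub_of_norm_lt_one hElt1
  have hH2det : IsUnit H2.det := (Matrix.isUnit_iff_isUnit_det _).mp hH2
  have hfac : H2 - Hoᵀ * Hd⁻¹ * Ho = H2 * (1 - E) := by
    rw [mul_sub, mul_one, hE_def, ← mul_assoc, Matrix.mul_nonsing_inv H2 hH2det, one_mul]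
  have hS : IsUnit (H2 - Hoᵀ * Hd⁻¹ * Ho) := by
    rw [hfac]; exact hH2.mul hUone
  refine ⟨hS, ?_⟩
  have hinv : (H2 - Hoᵀ * Hd⁻¹ * Ho)⁻¹ = (1 - E)⁻¹ * H2⁻¹ := by
    rw [hfac, Matrix.mul_inv_rev]
  have hone : ‖(1 : Matrix (Fin m) (Fin m) ℂ)‖ ≤ 1 := by
    rw [Matrix.cstar_norm_def, _root_.map_one]
    exact ContinuousLinearMap.norm_id_le
  have hinvE : ‖(1 - E)⁻¹‖ ≤ (1 - ‖E‖)⁻¹ := by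
    rw [Matrix.nonsing_inv_eq_ringInverse, ← geom_series_eq_inverse E hElt1]
    have := tsum_geometric_le_of_norm_lt_one E hElt1
    linarith
  have hnormbound : ‖(H2 - Hoᵀ * Hd⁻¹ * Ho)⁻¹‖ ≤ (1 - ‖E‖)⁻¹ * M1 := by
    rw [hinv]
    calc ‖(1 - E)⁻¹ * H2⁻¹‖ ≤ ‖(1 - E)⁻¹‖ * ‖H2⁻¹‖ := Matrix.l2_opNorm_mul _ _
      _ ≤ (1 - ‖E‖)⁻¹ * M1 := by
          apply mul_le_mul hinvE h1 (norm_nonneg _)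
          have : 0 < 1 - ‖E‖ := by linarith
          positivity
  refine hnormbound.trans ?_
  have hEpos : 0 < 1 - ‖E‖ := by linarith
  have hkey : (1 - ‖E‖)⁻¹ ≤ (c - M2) / (c - M2 - M1 * M2 ^ 2) := by
    have hE' : ‖E‖ * (c - M2) ≤ M1 * M2 ^ 2 := by
      have := (le_div_iff₀ hcM2).mp hEnorm
      linarith
    have h4 : (c - M2 - M1 * M2 ^ 2) / (c - M2) ≤ 1 - ‖E‖ := by
      rw [div_le_iff₀ hcM2]; nlinarith
    calc (1 - ‖E‖)⁻¹ ≤ ((c - M2 - M1 * M2 ^ 2) / (c - M2))⁻¹ := by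
          gcongr
      _ = (c - M2) / (c - M2 - M1 * M2 ^ 2) := by rw [inv_div]
  calc (1 - ‖E‖)⁻¹ * M1 ≤ ((c - M2) / (c - M2 - M1 * M2 ^ 2)) * M1 :=
        mul_le_mul_of_nonneg_right hkey (le_of_lt hM1)
    _ = (c - M2) * M1 / (c - M2 - M1 * M2 ^ 2) := by ring
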